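/- For every α ∈ ℝ, defining F(b, α) = b^{5/3} Σ_{k∈ℤ} (|k+α|³ + b)^{−2} for b > 0, one has lim_{b→∞} F(b, α) = 2∫₀^∞ dx/(x³+1)² = (8/27)√3 π. -/

import Mathlib

set_option maxHeartbeats 1000000


open MeasureTheory Real Filter
open Topology

/-- The constant `k(α)` from (K1): `1/|sin(2πα)|` when `α mod 1 ∈ (0,1/4)∪(3/4,1)`,
and `1` when `α mod 1 ∈ [1/4,3/4]`. -/
noncomputable def kConst (α : ℝ) : ℝ :=
  if 1/4 ≤ Int.fract α ∧ Int.fract α ≤ 3/4 then 1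
  else 1 / |Real.sin (2 * Real.pi * α)|

/-- `F(b,α) = b^{5/3} Σ_{k∈ℤ} (|k+α|³+b)^{-2}`. -/
noncomputable def Fsum (α b : ℝ) : ℝ :=
  b ^ ((5:ℝ)/3) * ∑' k : ℤ, ((|(k : ℝ) + α| ^ 3 + b) ^ 2)⁻¹

/-- `sup_{b ≥ 0} F(b,α)`. -/
noncomputable def supF (α : ℝ) : ℝ := ⨆ b : {x : ℝ // 0 ≤ x}, Fsum α b.1

/-- The constant `K₂(α)`. -/
noncomputable def K2 (α : ℝ) : ℝ :=
  5 / (3 * Real.sqrt 3 * Real.pi) * (supF α) ^ 2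

/-- `K(α) = min(K₁(α), K₂(α))` with `K₁(α) = k(α)²`. -/
noncomputable def Kmin (α : ℝ) : ℝ := min ((kConst α) ^ 2) (K2 α)

noncomputable def Gaux (x : ℝ) : ℝ :=
  x / (3 * (x^3+1)) + (2/9) * Real.log (1+x) - (1/9) * Real.log (x^2-x+1)
    + (2/(3*Real.sqrt 3)) * Real.arctan ((2*x-1)/Real.sqrt 3)

lemma quad_pos (x : ℝ) : 0 < x^2 - x + 1 := by nlinarith [sq_nonneg (x - 1/2), sq_nonneg x]

lemma Gaux_deriv (x : ℝ) (hx : 0 ≤ x) :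
    HasDerivAt Gaux (((x ^ 3 + 1) ^ 2)⁻¹) x := by
  have hx3 : (0:ℝ) < x^3 + 1 := by positivity
  have h1x : (0:ℝ) < 1 + x := by positivity
  have hq := quad_pos x
  have hs3 : (0:ℝ) < Real.sqrt 3 := Real.sqrt_pos.mpr (by norm_num)
  have hs3sq : Real.sqrt 3 ^ 2 = 3 := Real.sq_sqrt (by norm_num)
  have d1 : HasDerivAt (fun x : ℝ => x / (3 * (x^3+1)))
      ((1 * (3*(x^3+1)) - x * (3*(3*x^2))) / (3*(x^3+1))^2) x := by
    exact (hasDerivAt_id x).div (by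
      simpa using ((hasDerivAt_pow 3 x).add_const 1).const_mul 3) (by positivity)
  have d2 : HasDerivAt (fun x : ℝ => (2/9) * Real.log (1+x)) ((2/9) * (1/(1+x))) x := by
    have : HasDerivAt (fun x : ℝ => 1 + x) 1 x := by simpa using (hasDerivAt_id x).const_add 1
    simpa using ((this.log (by positivity)).const_mul (2/9))
  have d3 : HasDerivAt (fun x : ℝ => (1/9) * Real.log (x^2-x+1))
      ((1/9) * ((2*x-1)/(x^2-x+1))) x := by
    have h : HasDerivAt (fun x : ℝ => x^2-x+1) (2*x-1) x := by
      have := ((hasDerivAt_pow 2 x).sub (hasDerivAt_id x)).add_const 1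
      simpa using this
    simpa [one_div] using ((h.log (ne_of_gt hq)).const_mul ((9:ℝ)⁻¹))
  have d4 : HasDerivAt (fun x : ℝ => (2/(3*Real.sqrt 3)) * Real.arctan ((2*x-1)/Real.sqrt 3))
      ((2/(3*Real.sqrt 3)) * ((1 + ((2*x-1)/Real.sqrt 3)^2)⁻¹ * (2/Real.sqrt 3))) x := by
    have h : HasDerivAt (fun x : ℝ => (2*x-1)/Real.sqrt 3) (2/Real.sqrt 3) x := by
      have : HasDerivAt (fun x : ℝ => 2*x-1) 2 x := by
        simpa using ((hasDerivAt_id x).const_mul 2).sub_const 1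
      simpa [div_eq_mul_inv] using this.mul_const (Real.sqrt 3)⁻¹
    have := (Real.hasDerivAt_arctan ((2*x-1)/Real.sqrt 3)).comp x h
    simpa [one_div] using this.const_mul (2/(3*Real.sqrt 3))
  have := ((d1.add d2).sub d3).add d4
  refine this.congr_deriv ?_
  have hden : 1 + ((2*x-1)/Real.sqrt 3)^2 = (3 + (2*x-1)^2)/3 := by
    rw [div_pow, hs3sq]; ring
  have h3q : 3 + (2*x-1)^2 = 4*(x^2-x+1) := by ring
  have e : (2/(3*Real.sqrt 3)) * (2/Real.sqrt 3) = 4/9 := by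
    rw [div_mul_div_comm]
    rw [show 3*Real.sqrt 3*Real.sqrt 3 = 9 by
      rw [mul_assoc, Real.mul_self_sqrt (by norm_num : (0:ℝ) ≤ 3)]; norm_num]
    norm_num
  have dval : (2/(3*Real.sqrt 3)) * ((1 + ((2*x-1)/Real.sqrt 3)^2)⁻¹ * (2/Real.sqrt 3))
      = 1/(3*(x^2-x+1)) := by
    rw [hden, h3q]
    rw [show (2/(3*Real.sqrt 3)) * ((4*(x^2-x+1)/3)⁻¹ * (2/Real.sqrt 3))
        = ((2/(3*Real.sqrt 3)) * (2/Real.sqrt 3)) * (4*(x^2-x+1)/3)⁻¹ from by ring, e]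
    field_simp
    ring
  rw [dval]
  field_simp [show x*(x-1)+1 ≠ 0 by nlinarith]
  ring

lemma tendsto_Gaux : Tendsto Gaux atTop (𝓝 (Real.pi/(3*Real.sqrt 3))) := by
  have hs3 : (0:ℝ) < Real.sqrt 3 := Real.sqrt_pos.mpr (by norm_num)
  have T1 : Tendsto (fun x:ℝ => x/(3*(x^3+1))) atTop (𝓝 0) := by
    have hup : Tendsto (fun x:ℝ => (x^2)⁻¹) atTop (𝓝 0) :=
      (tendsto_pow_atTop (by norm_num : (2:ℕ) ≠ 0)).inv_tendsto_atTop
    apply tendsto_of_tendsto_of_tendsto_of_le_of_le' tendsto_const_nhds hup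
    · filter_upwards [eventually_ge_atTop (1:ℝ)] with x hx
      positivity
    · filter_upwards [eventually_ge_atTop (1:ℝ)] with x hx
      rw [div_le_iff₀ (by positivity), inv_mul_eq_div, le_div_iff₀ (by positivity)]
      nlinarith
  have T2 : Tendsto (fun x:ℝ => (2/9) * Real.log (1+x) - (1/9) * Real.log (x^2-x+1))
      atTop (𝓝 0) := by
    have hr : Tendsto (fun x:ℝ => 1 + (3*x)/(x^2-x+1)) atTop (𝓝 1) := by
      have h0 : Tendsto (fun x:ℝ => (3*x)/(x^2-x+1)) atTop (𝓝 0) := by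
        have hup : Tendsto (fun x:ℝ => 6/x) atTop (𝓝 0) :=
          tendsto_const_nhds.div_atTop tendsto_id
        apply tendsto_of_tendsto_of_tendsto_of_le_of_le' tendsto_const_nhds hup
        · filter_upwards [eventually_ge_atTop (2:ℝ)] with x hx
          have := quad_pos x
          positivity
        · filter_upwards [eventually_ge_atTop (2:ℝ)] with x hx
          rw [div_le_div_iff₀ (quad_pos x) (by positivity)]
          nlinarith
      simpa using (tendsto_const_nhds.add h0 : Tendsto (fun x:ℝ => 1 + (3*x)/(x^2-x+1)) atTop (𝓝 (1+0)))
    have hlog : Tendsto (fun x:ℝ => (1/9) * Real.log (1 + (3*x)/(x^2-x+1))) atTop (𝓝 0) := by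
      have := ((Real.continuousAt_log (by norm_num : (1:ℝ) ≠ 0)).tendsto.comp hr).const_mul (1/9 : ℝ)
      simpa using this
    apply hlog.congr'
    filter_upwards [eventually_gt_atTop (0:ℝ)] with x hx
    have h1x : (0:ℝ) < 1 + x := by positivity
    have hq := quad_pos x
    have key : 1 + (3*x)/(x^2-x+1) = (1+x)^2 / (x^2-x+1) := by
      field_simp [show x*(x-1)+1 ≠ 0 by nlinarith]; ring
    rw [key, Real.log_div (pow_ne_zero 2 (ne_of_gt h1x)) (ne_of_gt hq), Real.log_pow]
    push_cast
    ring
  have T3 : Tendsto (fun x:ℝ => (2/(3*Real.sqrt 3)) * Real.arctan ((2*x-1)/Real.sqrt 3))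
      atTop (𝓝 ((2/(3*Real.sqrt 3)) * (Real.pi/2))) := by
    have hu : Tendsto (fun x:ℝ => (2*x-1)/Real.sqrt 3) atTop atTop := by
      apply Tendsto.atTop_div_const hs3
      apply tendsto_atTop_add_const_right
      exact (tendsto_id.const_mul_atTop (by norm_num : (0:ℝ) < 2))
    exact ((Real.tendsto_arctan_atTop.mono_right nhdsWithin_le_nhds).comp hu).const_mul _
  have := (T1.add T2).add T3
  have heq : (0 + 0 + (2/(3*Real.sqrt 3)) * (Real.pi/2)) = Real.pi/(3*Real.sqrt 3) := by ring
  rw [heq] at this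
  exact this.congr (fun x => by simp [Gaux]; ring)

lemma Gaux_zero : Gaux 0 = -(Real.pi/(9*Real.sqrt 3)) := by
  have hs3 : (0:ℝ) < Real.sqrt 3 := Real.sqrt_pos.mpr (by norm_num)
  have harc : Real.arctan (1/Real.sqrt 3) = Real.pi/6 :=
    Real.arctan_eq_of_tan_eq Real.tan_pi_div_six
      ⟨by linarith [Real.pi_pos], by linarith [Real.pi_pos]⟩
  have h1 : Real.arctan ((2*(0:ℝ)-1)/Real.sqrt 3) = -(Real.pi/6) := by
    rw [show ((2*(0:ℝ)-1)/Real.sqrt 3) = -(1/Real.sqrt 3) from by ring, Real.arctan_neg, harc]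
  unfold Gaux
  rw [h1]
  norm_num
  ring

lemma int_value : ∫ x in Set.Ioi (0:ℝ), ((x ^ 3 + 1) ^ 2)⁻¹ = 4/27 * Real.sqrt 3 * Real.pi := by
  have h := integral_Ioi_of_hasDerivAt_of_nonneg' (g := Gaux)
    (g' := fun x => ((x ^ 3 + 1) ^ 2)⁻¹) (a := 0)
    (fun x hx => Gaux_deriv x hx) (fun x hx => by positivity) tendsto_Gaux
  rw [h, Gaux_zero]
  have hs3 : (0:ℝ) < Real.sqrt 3 := Real.sqrt_pos.mpr (by norm_num)
  have h3 : Real.sqrt 3 * Real.sqrt 3 = 3 := Real.mul_self_sqrt (by norm_num)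
  field_simp
  linear_combination (-108) * h3

lemma int_f_integrable : IntegrableOn (fun x:ℝ => ((x ^ 3 + 1) ^ 2)⁻¹) (Set.Ioi 0) := by
  exact integrableOn_Ioi_deriv_of_nonneg' (fun x hx => Gaux_deriv x hx)
    (fun x hx => by positivity) tendsto_Gaux

noncomputable def gfun (x : ℝ) : ℝ := ((|x| ^ 3 + 1) ^ 2)⁻¹

lemma gfun_cont : Continuous gfun := by
  apply Continuous.inv₀
  · continuity
  · intro x; positivity

lemma gfun_nonneg (x : ℝ) : 0 ≤ gfun x := by unfold gfun; positivity

lemma hf_abs : IntegrableOn (fun x : ℝ => gfun x) (Set.Ioi 0) := by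
  apply int_f_integrable.congr_fun _ measurableSet_Ioi
  intro x hx
  simp only [gfun, abs_of_pos (Set.mem_Ioi.mp hx)]

lemma gfun_integrable : Integrable gfun := by
  have int_Iic : IntegrableOn (fun x : ℝ => gfun x) (Set.Iic 0) := by
    rw [← Measure.map_neg_eq_self (volume : Measure ℝ)]
    have m : MeasurableEmbedding fun x : ℝ => -x := (Homeomorph.neg ℝ).measurableEmbedding
    rw [m.integrableOn_map_iff]
    have : ((fun x : ℝ => gfun x) ∘ fun x : ℝ => -x) = fun x : ℝ => gfun x := by
      funext x; simp [gfun, Function.comp, abs_neg]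
    rw [this, Set.neg_preimage, Set.neg_Iic, neg_zero]
    exact (integrableOn_Ici_iff_integrableOn_Ioi).mpr hf_abs
  rw [← integrableOn_univ, ← Set.Iic_union_Ioi (a := (0:ℝ))]
  exact int_Iic.union hf_abs

lemma integral_gfun : ∫ x, gfun x = 8/27 * Real.sqrt 3 * Real.pi := by
  have : ∫ x, gfun x = 2 * ∫ x in Set.Ioi (0:ℝ), ((x ^ 3 + 1) ^ 2)⁻¹ := by
    simpa [gfun] using integral_comp_abs (f := fun x : ℝ => ((x ^ 3 + 1) ^ 2)⁻¹)
  rw [this, int_value]; ring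

lemma gbound {x y : ℝ} (h : |y - x| ≤ 1/2) : gfun y ≤ 16 * gfun x := by
  have h1 : |x| ≤ |y| + 1/2 := by
    have h2 := abs_sub_abs_le_abs_sub x y
    rw [abs_sub_comm] at h2
    linarith
  have hcube : |x|^3 ≤ (|y| + 1/2)^3 := pow_le_pow_left₀ (abs_nonneg x) h1 3
  have h2 : |x|^3 + 1 ≤ 4*(|y|^3+1) := by nlinarith [abs_nonneg y, sq_nonneg (|y| - 1/2)]
  have key : (1:ℝ)/((|y|^3+1)^2) ≤ 16/((|x|^3+1)^2) := by
    rw [div_le_div_iff₀ (by positivity) (by positivity)]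
    nlinarith [mul_nonneg (sub_nonneg.mpr h2) (by positivity : (0:ℝ) ≤ 4*(|y|^3+1) + (|x|^3+1))]
  simpa [gfun, one_div, div_eq_mul_inv] using key

lemma step_close (α : ℝ) {h : ℝ} (hpos : 0 < h) (x : ℝ) :
    |h * ((⌊x / h⌋ : ℝ) + α) - x| ≤ h * (1 + |α|) := by
  have hfr1 : ((⌊x/h⌋:ℝ)) ≤ x/h := Int.floor_le _
  have hfr2 : x/h < (⌊x/h⌋:ℝ)+1 := Int.lt_floor_add_one _
  have hxh : h * (x / h) = x := by field_simp
  have h1 : h * (⌊x/h⌋:ℝ) ≤ x := by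
    nlinarith [mul_le_mul_of_nonneg_left hfr1 hpos.le]
  have h2 : x < h * (⌊x/h⌋:ℝ) + h := by
    nlinarith [mul_lt_mul_of_pos_left hfr2 hpos]
  have e : h * ((⌊x/h⌋:ℝ) + α) - x = (h * (⌊x/h⌋:ℝ) - x) + h * α := by ring
  rw [e]
  calc |(h * (⌊x/h⌋:ℝ) - x) + h * α| ≤ |h * (⌊x/h⌋:ℝ) - x| + |h * α| := abs_add_le _ _
    _ ≤ h + h * |α| := add_le_add (abs_le.mpr ⟨by linarith, by linarith⟩)
        (by rw [abs_mul, abs_of_pos hpos])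
    _ = h * (1 + |α|) := by ring

lemma Fsum_eq_integral (α b : ℝ) (hb : 0 < b)
    (hsm : b ^ (-(1:ℝ)/3) * (1 + |α|) ≤ 1/2) :
    Fsum α b = ∫ x, gfun (b ^ (-(1:ℝ)/3) * ((⌊x / b ^ (-(1:ℝ)/3)⌋ : ℝ) + α)) := by
  set h : ℝ := b ^ (-(1:ℝ)/3) with hh
  have hpos : 0 < h := Real.rpow_pos_of_pos hb _
  have hcube : h ^ 3 = b⁻¹ := by
    rw [hh, ← Real.rpow_natCast (b ^ (-(1:ℝ)/3)) 3, ← Real.rpow_mul hb.le]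
    norm_num [Real.rpow_neg_one]
  have hb52 : b ^ ((5:ℝ)/3) = b ^ 2 * h := by
    rw [hh, ← Real.rpow_natCast b 2, ← Real.rpow_add hb]
    norm_num
  -- measurability of the step function
  have hmφ : Measurable (fun x : ℝ => h * ((⌊x / h⌋ : ℝ) + α)) := by
    apply Measurable.const_mul
    apply Measurable.add_const
    exact measurable_from_top.comp ((measurable_id.div_const h).floor)
  have hmeas : Measurable (fun x : ℝ => gfun (h * ((⌊x / h⌋ : ℝ) + α))) :=
    gfun_cont.measurable.comp hmφ
  have hclose : ∀ x : ℝ, |h * ((⌊x / h⌋ : ℝ) + α) - x| ≤ 1/2 := fun x =>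
    (step_close α hpos x).trans hsm
  have hInt : Integrable (fun x : ℝ => gfun (h * ((⌊x / h⌋ : ℝ) + α))) := by
    apply Integrable.mono (gfun_integrable.const_mul 16) hmeas.aestronglyMeasurable
    filter_upwards with x
    rw [Real.norm_eq_abs, Real.norm_eq_abs, abs_of_nonneg (gfun_nonneg _),
      abs_of_nonneg (mul_nonneg (by norm_num) (gfun_nonneg x))]
    exact gbound (hclose x)
  set s : ℤ → Set ℝ := fun k => Set.Ico ((k:ℝ)*h) (((k:ℝ)+1)*h) with hs
  have hU : (⋃ k : ℤ, s k) = Set.univ := by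
    ext x
    simp only [hs, Set.mem_iUnion, Set.mem_univ, iff_true, Set.mem_Ico]
    refine ⟨⌊x/h⌋, ?_, ?_⟩
    · have := Int.floor_le (x/h)
      calc ((⌊x/h⌋:ℝ))*h ≤ (x/h)*h := by nlinarith
        _ = x := by field_simp
    · have := Int.lt_floor_add_one (x/h)
      calc x = (x/h)*h := by field_simp
        _ < ((⌊x/h⌋:ℝ)+1)*h := by nlinarith
  have hdisj : Pairwise (Function.onFun Disjoint s) := by
    intro i j hij
    rcases hij.lt_or_gt with hlt | hlt
    · have hij' : ((i:ℝ)+1) ≤ (j:ℝ) := by exact_mod_cast hlt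
      apply Set.Ico_disjoint_Ico.mpr
      apply min_le_of_left_le
      apply le_max_of_le_right
      nlinarith
    · have hij' : ((j:ℝ)+1) ≤ (i:ℝ) := by exact_mod_cast hlt
      apply Set.Ico_disjoint_Ico.mpr
      apply min_le_of_right_le
      apply le_max_of_le_left
      nlinarith
  have term : ∀ k : ℤ, h * gfun (h * ((k:ℝ) + α))
      = b ^ ((5:ℝ)/3) * ((|(k:ℝ)+α|^3 + b)^2)⁻¹ := by
    intro k
    have e1 : |h * ((k:ℝ)+α)| ^ 3 = b⁻¹ * |(k:ℝ)+α| ^ 3 := by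
      rw [abs_mul, abs_of_pos hpos, mul_pow, hcube]
    unfold gfun
    rw [e1, hb52]
    have e2 : (b⁻¹ * |(k:ℝ)+α|^3 + 1)^2 = ((|(k:ℝ)+α|^3 + b)^2) * (b^2)⁻¹ := by
      field_simp
    rw [e2, mul_inv, inv_inv]
    ring
  have piece : ∀ k : ℤ, ∫ x in s k, gfun (h * ((⌊x / h⌋ : ℝ) + α))
      = b ^ ((5:ℝ)/3) * ((|(k:ℝ)+α|^3 + b)^2)⁻¹ := by
    intro k
    have hfl : ∀ x ∈ s k, gfun (h * ((⌊x / h⌋ : ℝ) + α)) = gfun (h * ((k:ℝ) + α)) := by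
      intro x hx
      obtain ⟨hx1, hx2⟩ := hx
      have hk : ⌊x/h⌋ = k := by
        apply Int.floor_eq_iff.mpr
        constructor
        · rw [le_div_iff₀ hpos]; exact hx1
        · rw [div_lt_iff₀ hpos]; push_cast; exact hx2
      rw [hk]
    rw [setIntegral_congr_fun measurableSet_Ico hfl, setIntegral_const, Real.volume_real_Ico,
      show ((k:ℝ)+1)*h - (k:ℝ)*h = h by ring, max_eq_left hpos.le, smul_eq_mul,
      term k]
  symm
  calc ∫ x, gfun (h * ((⌊x / h⌋ : ℝ) + α))
      = ∫ x in ⋃ k : ℤ, s k, gfun (h * ((⌊x / h⌋ : ℝ) + α)) := by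
        rw [hU, setIntegral_univ]
    _ = ∑' k : ℤ, ∫ x in s k, gfun (h * ((⌊x / h⌋ : ℝ) + α)) :=
        integral_iUnion (fun k => measurableSet_Ico) hdisj hInt.integrableOn
    _ = ∑' k : ℤ, b ^ ((5:ℝ)/3) * ((|(k:ℝ)+α|^3 + b)^2)⁻¹ := tsum_congr piece
    _ = Fsum α b := by rw [tsum_mul_left]; rfl


lemma h_tendsto : Tendsto (fun b : ℝ => b ^ (-(1:ℝ)/3)) atTop (𝓝 0) := by
  have := tendsto_rpow_neg_atTop (y := 1/3) (by norm_num)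
  simpa [neg_div] using this

lemma eventually_small (α : ℝ) :
    ∀ᶠ b : ℝ in atTop, 0 < b ∧ b ^ (-(1:ℝ)/3) * (1 + |α|) ≤ 1/2 := by
  have hε : (0:ℝ) < 1/(2*(1+|α|)) := by positivity
  filter_upwards [eventually_gt_atTop (0:ℝ),
    h_tendsto.eventually_lt_const hε] with b hb hsm
  refine ⟨hb, ?_⟩
  have h1α : (0:ℝ) < 1 + |α| := by positivity
  rw [lt_div_iff₀ (by positivity)] at hsm
  nlinarith

lemma step_tendsto (α : ℝ) :
    Tendsto (fun b : ℝ => ∫ x, gfun (b ^ (-(1:ℝ)/3) * ((⌊x / b ^ (-(1:ℝ)/3)⌋ : ℝ) + α)))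
      atTop (𝓝 (∫ x, gfun x)) := by
  apply tendsto_integral_filter_of_dominated_convergence (bound := fun x => 16 * gfun x)
  · filter_upwards with b
    apply Measurable.aestronglyMeasurable
    apply gfun_cont.measurable.comp
    apply Measurable.const_mul
    apply Measurable.add_const
    exact measurable_from_top.comp ((measurable_id.div_const _).floor)
  · filter_upwards [eventually_small α] with b hb
    obtain ⟨hbpos, hsm⟩ := hb
    filter_upwards with x
    rw [Real.norm_eq_abs, abs_of_nonneg (gfun_nonneg _)]
    exact gbound ((step_close α (Real.rpow_pos_of_pos hbpos _) x).trans hsm)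
  · exact gfun_integrable.const_mul 16
  · filter_upwards with x
    have hdiff : Tendsto (fun b : ℝ =>
        b ^ (-(1:ℝ)/3) * ((⌊x / b ^ (-(1:ℝ)/3)⌋ : ℝ) + α) - x) atTop (𝓝 0) := by
      apply squeeze_zero_norm'
      · filter_upwards [eventually_gt_atTop (0:ℝ)] with b hb
        exact step_close α (Real.rpow_pos_of_pos hb _) x
      · simpa using h_tendsto.mul_const (1 + |α|)
    have hφ : Tendsto (fun b : ℝ =>
        b ^ (-(1:ℝ)/3) * ((⌊x / b ^ (-(1:ℝ)/3)⌋ : ℝ) + α)) atTop (𝓝 x) := by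
      have := hdiff.add (tendsto_const_nhds (x := x))
      simpa using this
    exact (gfun_cont.tendsto x).comp hφ

/-- `lim_{b→∞} F(b,α) = 2∫₀^∞ dx/(x³+1)² = (8/27)√3 π`. -/
theorem Fsum_limit_atTop (α : ℝ) :
    Filter.Tendsto (fun b : ℝ => Fsum α b) Filter.atTop
      (nhds (8/27 * Real.sqrt 3 * Real.pi)) ∧
    2 * ∫ x in Set.Ioi (0:ℝ), ((x ^ 3 + 1) ^ 2)⁻¹ = 8/27 * Real.sqrt 3 * Real.pi := by
  constructor
  · have h1 := step_tendsto α
    rw [integral_gfun] at h1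
    apply h1.congr'
    filter_upwards [eventually_small α] with b hb
    exact (Fsum_eq_integral α b hb.1 hb.2).symm
  · rw [int_value]; ring
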